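/- Let W ∈ ℝ^{m×r} have rank r. Define K(W) = maxᵢ ‖wᵢ‖₂, ν(W) = minᵢ ‖wᵢ‖₂, γ(W) = min_{i≠j}‖wᵢ−w_j‖₂, ω(W) = min(ν(W), γ(W)/√2), and κ(W) = σ₁(W)/σ_r(W). Then 1 ≤ K(W)/ω(W) ≤ κ(W). In particular, if κ(W) = 1 then K(W) = ω(W). -/

import Mathlib

/-- The `j`-th largest singular value of `A ∈ ℝ^{m×r}` via the Courant–Fischer
max-min characterization. -/
noncomputable def sv {m r : ℕ} (A : Matrix (Fin m) (Fin r) ℝ) (j : ℕ) : ℝ :=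
  ⨆ S : {S : Submodule ℝ (Fin r → ℝ) // Module.finrank ℝ S = j},
    ⨅ x : {x : Fin r → ℝ // x ∈ S.1 ∧ ∑ i, x i ^ 2 = 1},
      Real.sqrt (∑ a, A.mulVec x.1 a ^ 2)

variable {m r : ℕ} (W : Matrix (Fin m) (Fin r) ℝ)

noncomputable def fval (x : Fin r → ℝ) : ℝ := Real.sqrt (∑ a, W.mulVec x a ^ 2)

noncomputable def Cb : ℝ := Real.sqrt (∑ a, ∑ i, W a i ^ 2)

lemma fval_le_Cb (x : Fin r → ℝ) (hx : ∑ i, x i ^ 2 = 1) : fval W x ≤ Cb W := by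
  apply Real.sqrt_le_sqrt
  apply Finset.sum_le_sum
  intro a _
  have h := Finset.sum_mul_sq_le_sq_mul_sq Finset.univ (fun i => W a i) x
  calc W.mulVec x a ^ 2 = (∑ i, W a i * x i) ^ 2 := by
        simp [Matrix.mulVec, dotProduct]
    _ ≤ (∑ i, W a i ^ 2) * ∑ i, x i ^ 2 := h
    _ = ∑ i, W a i ^ 2 := by rw [hx, mul_one]

lemma bddAbove_inf (j : ℕ) :
    BddAbove (Set.range fun S : {S : Submodule ℝ (Fin r → ℝ) // Module.finrank ℝ S = j} =>
      ⨅ x : {x : Fin r → ℝ // x ∈ S.1 ∧ ∑ i, x i ^ 2 = 1},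
        Real.sqrt (∑ a, W.mulVec x.1 a ^ 2)) := by
  refine ⟨max (Cb W) 0, ?_⟩
  rintro _ ⟨S, rfl⟩
  by_cases h : Nonempty {x : Fin r → ℝ // x ∈ S.1 ∧ ∑ i, x i ^ 2 = 1}
  · obtain ⟨x⟩ := h
    refine le_trans (ciInf_le ⟨0, ?_⟩ x) (le_max_of_le_left (fval_le_Cb W x.1 x.2.2))
    rintro _ ⟨y, rfl⟩; exact Real.sqrt_nonneg _
  · rw [not_nonempty_iff] at h
    simp only []
    rw [iInf_of_isEmpty]
    simp [Real.sInf_empty]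

lemma finrank_pi_fin : Module.finrank ℝ (Fin r → ℝ) = r := by
  simp [Module.finrank_pi]

lemma sv_r_le (x : Fin r → ℝ) (hx : ∑ i, x i ^ 2 = 1) : sv W r ≤ fval W x := by
  haveI : Nonempty {S : Submodule ℝ (Fin r → ℝ) // Module.finrank ℝ S = r} :=
    ⟨⟨⊤, by rw [finrank_top, finrank_pi_fin]⟩⟩
  apply ciSup_le
  intro S
  have hS : S.1 = ⊤ := Submodule.eq_top_of_finrank_eq (by rw [S.2, finrank_pi_fin])
  have hmem : x ∈ S.1 := hS ▸ Submodule.mem_top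
  exact ciInf_le ⟨0, by rintro _ ⟨y, rfl⟩; exact Real.sqrt_nonneg _⟩
    (⟨x, hmem, hx⟩ : {y : Fin r → ℝ // y ∈ S.1 ∧ ∑ i, y i ^ 2 = 1})

lemma single_sq_sum (i : Fin r) : ∑ k, (Pi.single i 1 : Fin r → ℝ) k ^ 2 = 1 := by
  have : ∀ k, (Pi.single i 1 : Fin r → ℝ) k ^ 2 = (Pi.single i 1 : Fin r → ℝ) k := by
    intro k
    rcases eq_or_ne k i with h | h <;> simp [Pi.single_apply, h]
  simp only [this]
  simp [Finset.sum_pi_single]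

lemma fval_single (i : Fin r) : fval W (Pi.single i 1) = Real.sqrt (∑ a, W a i ^ 2) := by
  unfold fval
  congr 1
  apply Finset.sum_congr rfl
  intro a _
  rw [Matrix.mulVec_single]
  simp

lemma le_sv_one (i : Fin r) : Real.sqrt (∑ a, W a i ^ 2) ≤ sv W 1 := by
  have hne : (Pi.single i 1 : Fin r → ℝ) ≠ 0 := by
    intro h
    have := congrFun h i
    simp at this
  set S : Submodule ℝ (Fin r → ℝ) := Submodule.span ℝ {(Pi.single i 1 : Fin r → ℝ)} with hSdef
  have hfr : Module.finrank ℝ S = 1 := finrank_span_singleton hne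
  refine le_trans ?_ (le_ciSup (bddAbove_inf W 1) (⟨S, hfr⟩ : {S : Submodule ℝ (Fin r → ℝ) // Module.finrank ℝ S = 1}))
  haveI : Nonempty {x : Fin r → ℝ // x ∈ S ∧ ∑ k, x k ^ 2 = 1} :=
    ⟨⟨Pi.single i 1, Submodule.mem_span_singleton_self _, single_sq_sum i⟩⟩
  apply le_ciInf
  rintro ⟨x, hxS, hx1⟩
  obtain ⟨c, rfl⟩ := Submodule.mem_span_singleton.mp hxS
  have hc : c ^ 2 = 1 := by
    have : ∑ k, (c • (Pi.single i 1 : Fin r → ℝ)) k ^ 2 = c ^ 2 * ∑ k, (Pi.single i 1 : Fin r → ℝ) k ^ 2 := by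
      rw [Finset.mul_sum]; apply Finset.sum_congr rfl; intro k _; simp [mul_pow]
    rw [this, single_sq_sum, mul_one] at hx1
    exact hx1
  have : Real.sqrt (∑ a, W.mulVec (c • (Pi.single i 1 : Fin r → ℝ)) a ^ 2)
      = Real.sqrt (c ^ 2 * ∑ a, W.mulVec (Pi.single i 1 : Fin r → ℝ) a ^ 2) := by
    congr 1
    rw [Finset.mul_sum]
    apply Finset.sum_congr rfl
    intro a _
    rw [Matrix.mulVec_smul]
    simp [mul_pow]
  rw [this, hc, one_mul]
  exact le_of_eq (fval_single W i).symm

lemma sv_r_pos (hr : 0 < r) (hrank : W.rank = r) : 0 < sv W r := by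
  -- injectivity
  have hrange : Module.finrank ℝ (LinearMap.range W.mulVecLin) = r := hrank
  have hker : LinearMap.ker W.mulVecLin = ⊥ := by
    have h1 := LinearMap.finrank_range_add_finrank_ker W.mulVecLin
    rw [hrange, finrank_pi_fin] at h1
    have h2 : Module.finrank ℝ (LinearMap.ker W.mulVecLin) = 0 := by omega
    exact Submodule.finrank_eq_zero.mp h2
  have hinj : Function.Injective W.mulVecLin := LinearMap.ker_eq_bot.mp hker
  -- compact sphere
  set Sp : Set (Fin r → ℝ) := {x | ∑ i, x i ^ 2 = 1} with hSp
  have hclosed : IsClosed Sp := isClosed_eq (by continuity) continuous_const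
  have hbdd : Bornology.IsBounded Sp := by
    apply Bornology.IsBounded.subset (Metric.isBounded_closedBall (x := (0 : Fin r → ℝ)) (r := 1))
    intro x hx
    simp only [Metric.mem_closedBall, dist_zero_right]
    rw [pi_norm_le_iff_of_nonneg zero_le_one]
    intro i
    have h1 : x i ^ 2 ≤ 1 := hx ▸ Finset.single_le_sum (fun j _ => sq_nonneg (x j)) (Finset.mem_univ i)
    rw [Real.norm_eq_abs]
    nlinarith [abs_nonneg (x i), sq_abs (x i)]
  have hcomp : IsCompact Sp := Metric.isCompact_iff_isClosed_bounded.mpr ⟨hclosed, hbdd⟩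
  have hne : Sp.Nonempty := ⟨Pi.single ⟨0, hr⟩ 1, single_sq_sum ⟨0, hr⟩⟩
  have hcont : Continuous (fun x : Fin r → ℝ => Real.sqrt (∑ a, W.mulVec x a ^ 2)) := by
    apply Real.continuous_sqrt.comp
    apply continuous_finset_sum
    intro a _
    have heq : (fun x : Fin r → ℝ => W.mulVec x a) = fun x => ∑ i, W a i * x i := by
      funext x; simp [Matrix.mulVec, dotProduct]
    have : Continuous (fun x : Fin r → ℝ => W.mulVec x a) := by
      rw [heq]; exact continuous_finset_sum _ fun i _ => continuous_const.mul (continuous_apply i)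
    exact this.pow 2
  obtain ⟨x₀, hx₀Sp, hmin⟩ := hcomp.exists_isMinOn hne hcont.continuousOn
  have hx₀pos : 0 < Real.sqrt (∑ a, W.mulVec x₀ a ^ 2) := by
    apply Real.sqrt_pos.mpr
    have hx₀ne : x₀ ≠ 0 := by
      intro h; rw [h] at hx₀Sp
      simp [hSp] at hx₀Sp
    have hWne : W.mulVec x₀ ≠ 0 := by
      intro h
      exact hx₀ne (hinj (by simpa using h))
    obtain ⟨a, ha⟩ := Function.ne_iff.mp hWne
    exact Finset.sum_pos' (fun b _ => sq_nonneg _) ⟨a, Finset.mem_univ a, by nlinarith [sq_abs (W.mulVec x₀ a), abs_pos.mpr ha]⟩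
  haveI hne2 : Nonempty {x : Fin r → ℝ // x ∈ (⊤ : Submodule ℝ (Fin r → ℝ)) ∧ ∑ i, x i ^ 2 = 1} :=
    ⟨⟨x₀, Submodule.mem_top, hx₀Sp⟩⟩
  have hinf : (0:ℝ) < ⨅ x : {x : Fin r → ℝ // x ∈ (⊤ : Submodule ℝ (Fin r → ℝ)) ∧ ∑ i, x i ^ 2 = 1},
      Real.sqrt (∑ a, W.mulVec x.1 a ^ 2) := by
    apply lt_of_lt_of_le hx₀pos
    apply le_ciInf
    rintro ⟨x, _, hx1⟩
    exact hmin hx1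
  refine lt_of_lt_of_le hinf (le_ciSup (bddAbove_inf W r) ⟨⊤, by rw [finrank_top, finrank_pi_fin]⟩)

lemma pair_sum_two (i j : Fin r) (hij : i ≠ j) :
    ∑ k, ((Pi.single i 1 : Fin r → ℝ) k - (Pi.single j 1 : Fin r → ℝ) k) ^ 2 = 2 := by
  have key : ∀ k, ((Pi.single i 1 : Fin r → ℝ) k - (Pi.single j 1 : Fin r → ℝ) k) ^ 2
      = (Pi.single i 1 : Fin r → ℝ) k + (Pi.single j 1 : Fin r → ℝ) k := by
    intro k
    rcases eq_or_ne k i with h | h <;> rcases eq_or_ne k j with h' | h'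
    · exact absurd (h.symm.trans h') hij
    · subst h; simp [Pi.single_apply, Ne.symm hij]
    · subst h'; simp [Pi.single_apply, hij]
    · simp [Pi.single_apply, h, h']
  simp only [key]
  rw [Finset.sum_add_distrib]
  norm_num [Finset.sum_pi_single]

lemma sv_r_le_pair (i j : Fin r) (hij : i ≠ j) :
    sv W r * Real.sqrt 2 ≤ Real.sqrt (∑ a, (W a i - W a j) ^ 2) := by
  have h2 : (0:ℝ) < Real.sqrt 2 := Real.sqrt_pos.mpr (by norm_num)
  set s : ℝ := (Real.sqrt 2)⁻¹ with hs
  have hs_pos : 0 < s := inv_pos.mpr h2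
  set x : Fin r → ℝ := s • ((Pi.single i 1 : Fin r → ℝ) - (Pi.single j 1 : Fin r → ℝ)) with hx
  have hxunit : ∑ k, x k ^ 2 = 1 := by
    have : ∑ k, x k ^ 2 = s ^ 2 * ∑ k, ((Pi.single i 1 : Fin r → ℝ) k - (Pi.single j 1 : Fin r → ℝ) k) ^ 2 := by
      rw [Finset.mul_sum]
      apply Finset.sum_congr rfl
      intro k _
      simp [hx, mul_pow]
    rw [this, pair_sum_two i j hij, hs]
    rw [inv_pow, Real.sq_sqrt (by norm_num : (0:ℝ) ≤ 2)]
    norm_num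
  have hfx : fval W x = s * Real.sqrt (∑ a, (W a i - W a j) ^ 2) := by
    unfold fval
    have : ∀ a, W.mulVec x a ^ 2 = s ^ 2 * (W a i - W a j) ^ 2 := by
      intro a
      have : W.mulVec x a = s * (W a i - W a j) := by
        rw [hx, Matrix.mulVec_smul]
        rw [show ((Pi.single i 1 : Fin r → ℝ) - (Pi.single j 1 : Fin r → ℝ)) =
          (Pi.single i 1 : Fin r → ℝ) + (-1 : ℝ) • (Pi.single j 1 : Fin r → ℝ) by ext k; simp; ring]
        rw [Matrix.mulVec_add, Matrix.mulVec_smul, Matrix.mulVec_single, Matrix.mulVec_single]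
        simp only [Pi.smul_apply, Pi.add_apply, neg_smul, one_smul, smul_eq_mul, mul_one,
          Pi.neg_apply, MulOpposite.op_one, Matrix.col_apply]
        ring
      rw [this, mul_pow]
    simp only [this]
    rw [← Finset.mul_sum, Real.sqrt_mul (sq_nonneg s), Real.sqrt_sq hs_pos.le]
  have hle := sv_r_le W x hxunit
  rw [hfx] at hle
  calc sv W r * Real.sqrt 2 ≤ (s * Real.sqrt (∑ a, (W a i - W a j) ^ 2)) * Real.sqrt 2 :=
        mul_le_mul_of_nonneg_right hle h2.le
    _ = Real.sqrt (∑ a, (W a i - W a j) ^ 2) := by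
        rw [mul_comm s, mul_assoc, hs, inv_mul_cancel₀ h2.ne', mul_one]

/-- for a rank-`r` matrix `W ∈ ℝ^{m×r}`,
`1 ≤ K(W)/ω(W) ≤ κ(W) = σ₁(W)/σ_r(W)`; in particular `κ(W) = 1` implies `K(W) = ω(W)`. -/
theorem stmt_10 (m r : ℕ) (hr : 2 ≤ r)
    (W : Matrix (Fin m) (Fin r) ℝ) (hrank : W.rank = r)
    (K ν γ ω : ℝ)
    (hK : K = ⨆ i : Fin r, Real.sqrt (∑ a, W a i ^ 2))
    (hν : ν = ⨅ i : Fin r, Real.sqrt (∑ a, W a i ^ 2))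
    (hγ : γ = ⨅ p : {p : Fin r × Fin r // p.1 ≠ p.2},
      Real.sqrt (∑ a, (W a p.1.1 - W a p.1.2) ^ 2))
    (hω : ω = min ν (γ / Real.sqrt 2)) :
    1 ≤ K / ω ∧ K / ω ≤ sv W 1 / sv W r ∧ (sv W 1 / sv W r = 1 → K = ω) := by
  have hrpos : 0 < r := by omega
  haveI : Nonempty (Fin r) := ⟨⟨0, hrpos⟩⟩
  have h2 : (0:ℝ) < Real.sqrt 2 := Real.sqrt_pos.mpr (by norm_num)
  -- ν ≤ K
  have hνK : ν ≤ K := by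
    rw [hν, hK]
    have hbb : BddBelow (Set.range fun i : Fin r => Real.sqrt (∑ a, W a i ^ 2)) :=
      ⟨0, fun y hy => by obtain ⟨i, rfl⟩ := hy; exact Real.sqrt_nonneg _⟩
    exact le_trans (ciInf_le hbb ⟨0, hrpos⟩)
      (le_ciSup (f := fun i : Fin r => Real.sqrt (∑ a, W a i ^ 2))
        (Set.Finite.bddAbove (Set.finite_range _)) (⟨0, hrpos⟩ : Fin r))
  -- σ_r ≤ ν
  have hσν : sv W r ≤ ν := by
    rw [hν]
    apply le_ciInf
    intro i
    have := sv_r_le W (Pi.single i 1) (single_sq_sum i)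
    rwa [fval_single] at this
  -- σ_r ≤ γ / √2
  have hσγ : sv W r ≤ γ / Real.sqrt 2 := by
    rw [le_div_iff₀ h2, hγ]
    haveI : Nonempty {p : Fin r × Fin r // p.1 ≠ p.2} :=
      ⟨⟨(⟨0, hrpos⟩, ⟨1, by omega⟩), by simp [Fin.ext_iff]⟩⟩
    exact le_ciInf fun p => sv_r_le_pair W p.1.1 p.1.2 p.2
  have hσω : sv W r ≤ ω := hω ▸ le_min hσν hσγ
  have hKσ : K ≤ sv W 1 := hK ▸ ciSup_le (le_sv_one W)
  have hσpos : 0 < sv W r := sv_r_pos W hrpos hrank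
  have hωpos : 0 < ω := lt_of_lt_of_le hσpos hσω
  have hωK : ω ≤ K := le_trans (hω ▸ min_le_left ν (γ / Real.sqrt 2)) hνK
  have hσ1pos : 0 < sv W 1 := lt_of_lt_of_le (lt_of_lt_of_le hωpos hωK) hKσ
  refine ⟨(one_le_div hωpos).mpr hωK, div_le_div₀ hσ1pos.le hKσ hσpos hσω, ?_⟩
  intro h
  have hσeq : sv W 1 = sv W r := (div_eq_one_iff_eq hσpos.ne').mp h
  have h1 : K ≤ ω := hKσ.trans (hσeq ▸ hσω)
  exact le_antisymm h1 hωK
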